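/- Let β < −2, α < 2β − 1 with α + 4 < 0, κ_g ≥ 16, and |γ_j| ≤ c_g|j|^α for |j| ≥ κ_g. Then for all k ∈ ℤ^3 with |k| ≥ 2κ_g, Σ'_j |k−j|^β |j| |γ_j| ≤ C(g,β) min{1, (2κ_g)^{−β}|k|^β} for a constant C depending on Σ'_j|j||γ_j|, c_g, β, α, κ_g. -/

import Mathlib

/-- Euclidean norm of a point of the integer lattice `ℤ³`. -/
noncomputable def enorm3 (k : Fin 3 → ℤ) : ℝ :=
  Real.sqrt (∑ i, ((k i : ℝ)) ^ 2)

/-- The canonical embedding into Euclidean space. -/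
noncomputable def emb (k : Fin 3 → ℤ) : EuclideanSpace ℝ (Fin 3) :=
  WithLp.toLp 2 (fun i => (k i : ℝ))

lemma enorm3_eq_norm (k : Fin 3 → ℤ) : enorm3 k = ‖emb k‖ := by
  rw [EuclideanSpace.norm_eq]
  unfold enorm3 emb
  congr 1
  refine Finset.sum_congr rfl fun i _ => ?_
  rw [Real.norm_eq_abs, sq_abs]

lemma enorm3_nonneg (k : Fin 3 → ℤ) : 0 ≤ enorm3 k := Real.sqrt_nonneg _

lemma emb_sub (k j : Fin 3 → ℤ) : emb (k - j) = emb k - emb j := by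
  ext i
  simp [emb]

lemma enorm3_triangle (k j : Fin 3 → ℤ) : enorm3 k ≤ enorm3 (k - j) + enorm3 j := by
  rw [enorm3_eq_norm, enorm3_eq_norm, enorm3_eq_norm, emb_sub]
  simpa using norm_add_le (emb k - emb j) (emb j)

lemma one_le_enorm3 {k : Fin 3 → ℤ} (hk : k ≠ 0) : 1 ≤ enorm3 k := by
  obtain ⟨i, hi⟩ := Function.ne_iff.mp hk
  have h1 : (1 : ℝ) ≤ ((k i : ℝ)) ^ 2 := by
    have : 1 ≤ |k i| := Int.one_le_abs (by simpa using hi)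
    have h2 : (1 : ℝ) ≤ |(k i : ℝ)| := by
      rw [← Int.cast_abs]; exact_mod_cast this
    calc (1:ℝ) = 1 ^ 2 := by norm_num
    _ ≤ |(k i : ℝ)| ^ 2 := by
        apply pow_le_pow_left₀ (by norm_num) h2 2
    _ = ((k i : ℝ)) ^ 2 := sq_abs _
  have hsum : (1 : ℝ) ≤ ∑ i, ((k i : ℝ)) ^ 2 := by
    calc (1:ℝ) ≤ ((k i : ℝ)) ^ 2 := h1
    _ ≤ ∑ i, ((k i : ℝ)) ^ 2 :=
        Finset.single_le_sum (f := fun i => ((k i : ℝ)) ^ 2) (fun i _ => sq_nonneg _) (Finset.mem_univ i)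
  calc (1:ℝ) = Real.sqrt 1 := (Real.sqrt_one).symm
  _ ≤ enorm3 k := Real.sqrt_le_sqrt hsum

lemma enorm3_pos {k : Fin 3 → ℤ} (hk : k ≠ 0) : 0 < enorm3 k :=
  lt_of_lt_of_le one_pos (one_le_enorm3 hk)

lemma abs_coord_le_enorm3 (k : Fin 3 → ℤ) (i : Fin 3) : |(k i : ℝ)| ≤ enorm3 k := by
  rw [← Real.sqrt_sq_eq_abs]
  exact Real.sqrt_le_sqrt
    (Finset.single_le_sum (fun i _ => sq_nonneg ((k i : ℝ))) (Finset.mem_univ i))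

lemma prod_le_enorm3 {m : Fin 3 → ℤ} (hm : m ≠ 0) :
    (∏ i, (1 + |(m i : ℝ)|)) ≤ 8 * enorm3 m ^ 3 := by
  have h1 : ∀ i : Fin 3, 1 + |(m i : ℝ)| ≤ 2 * enorm3 m := fun i => by
    have := abs_coord_le_enorm3 m i
    have := one_le_enorm3 hm
    linarith
  calc (∏ i, (1 + |(m i : ℝ)|)) ≤ ∏ _i : Fin 3, 2 * enorm3 m := by
        apply Finset.prod_le_prod (fun i _ => by positivity) (fun i _ => h1 i)
  _ = (2 * enorm3 m) ^ 3 := by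
      rw [Finset.prod_const]; norm_num
  _ = 8 * enorm3 m ^ 3 := by ring

lemma summable_one_add_abs_rpow {p : ℝ} (hp : p < -1) :
    Summable (fun n : ℤ => (1 + |(n : ℝ)|) ^ p) := by
  have hb : 1 < -p := by linarith
  have h1 : Summable (fun n : ℤ => |(n : ℝ)| ^ (-(-p))) := Real.summable_abs_int_rpow hb
  rw [neg_neg] at h1
  have h2 : Summable (fun n : ℤ => if n = 0 then (1:ℝ) else 0) := by
    apply summable_of_ne_finset_zero (s := {0})
    intro n hn
    simp only [Finset.mem_singleton] at hn
    simp [hn]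
  apply Summable.of_nonneg_of_le
    (f := fun n : ℤ => |(n : ℝ)| ^ p + (if n = 0 then (1:ℝ) else 0))
    (fun n => Real.rpow_nonneg (by positivity) _) _ (h1.add h2)
  intro n
  by_cases hn : n = 0
  · subst hn
    simp only [Int.cast_zero, abs_zero, if_true]
    rw [Real.zero_rpow (by linarith : p ≠ 0), zero_add, add_zero, Real.one_rpow]
  · have hpos : (0:ℝ) < |(n : ℝ)| := by
      simp only [abs_pos]
      exact_mod_cast hn
    simp only [if_neg hn, add_zero]
    exact Real.rpow_le_rpow_of_nonpos hpos (by linarith) (by linarith)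

/-- The equivalence between `Fin 3 → ℤ` and `ℤ × ℤ × ℤ`. -/
def equiv3 : (Fin 3 → ℤ) ≃ ℤ × ℤ × ℤ where
  toFun m := (m 0, m 1, m 2)
  invFun p := ![p.1, p.2.1, p.2.2]
  left_inv m := by
    funext i
    fin_cases i <;> rfl
  right_inv p := rfl

lemma equiv3_symm_comp {f : ℤ × ℤ × ℤ → ℝ} (m : Fin 3 → ℤ) :
    (f ∘ equiv3) m = f (m 0, m 1, m 2) := rfl

set_option maxHeartbeats 1000000 in
lemma summable_prod_one_add_abs_rpow {p : ℝ} (hp : p < -1) :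
    Summable (fun m : Fin 3 → ℤ => ∏ i, (1 + |(m i : ℝ)|) ^ p) := by
  have h1 := summable_one_add_abs_rpow hp
  have hnn : ∀ n : ℤ, 0 ≤ (1 + |(n : ℝ)|) ^ p := fun n => Real.rpow_nonneg (by positivity) _
  have h2 : Summable (fun q : ℤ × ℤ => (1 + |(q.1 : ℝ)|) ^ p * (1 + |(q.2 : ℝ)|) ^ p) :=
    h1.mul_of_nonneg h1 hnn hnn
  have h3 : Summable (fun q : ℤ × ℤ × ℤ =>
      (1 + |(q.1 : ℝ)|) ^ p * ((1 + |(q.2.1 : ℝ)|) ^ p * (1 + |(q.2.2 : ℝ)|) ^ p)) :=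
    h1.mul_of_nonneg h2 hnn (fun q => mul_nonneg (hnn _) (hnn _))
  have h4 := (equiv3.summable_iff (f := fun q : ℤ × ℤ × ℤ =>
      (1 + |(q.1 : ℝ)|) ^ p * ((1 + |(q.2.1 : ℝ)|) ^ p * (1 + |(q.2.2 : ℝ)|) ^ p))).mpr h3
  apply h4.congr
  intro m
  rw [equiv3_symm_comp, Fin.prod_univ_three]
  ring

lemma enorm3_rpow_le {q : ℝ} {m : Fin 3 → ℤ} (hm : m ≠ 0) (hq : q < 0) :
    enorm3 m ^ q ≤ (8:ℝ) ^ (-(q/3)) * ∏ i, (1 + |(m i : ℝ)|) ^ (q/3) := by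
  set a := enorm3 m with ha
  have ha1 : 1 ≤ a := one_le_enorm3 hm
  have ha0 : 0 < a := by linarith
  set P := ∏ i, (1 + |(m i : ℝ)|) with hP
  have hP0 : 0 < P := Finset.prod_pos (fun i _ => by positivity)
  have hPa : P ≤ 8 * a ^ 3 := prod_le_enorm3 hm
  have key : a ^ q = (a ^ 3) ^ (q/3) := by
    rw [← Real.rpow_natCast a 3, ← Real.rpow_mul ha0.le]
    norm_num
    rw [show (3:ℝ) * (q / 3) = q by ring]
  rw [key]
  have h1 : (a ^ 3 : ℝ) ^ (q/3) ≤ (P / 8) ^ (q/3) := by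
    apply Real.rpow_le_rpow_of_nonpos (by positivity) (by linarith) (by linarith)
  calc (a ^ 3 : ℝ) ^ (q/3) ≤ (P / 8) ^ (q/3) := h1
  _ = P ^ (q/3) / (8:ℝ) ^ (q/3) := Real.div_rpow hP0.le (by norm_num) _
  _ = (8:ℝ) ^ (-(q/3)) * P ^ (q/3) := by
      rw [Real.rpow_neg (by norm_num), div_eq_mul_inv, mul_comm]
  _ = (8:ℝ) ^ (-(q/3)) * ∏ i, (1 + |(m i : ℝ)|) ^ (q/3) := by
      rw [Real.finset_prod_rpow _ _ (fun i _ => by positivity)]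

lemma summable_lattice_rpow {q : ℝ} (hq : q < -3) :
    Summable (fun m : Fin 3 → ℤ => if m ≠ 0 then enorm3 m ^ q else 0) := by
  have hp : q / 3 < -1 := by linarith
  have hmaj := (summable_prod_one_add_abs_rpow hp).mul_left ((8:ℝ) ^ (-(q/3)))
  apply Summable.of_nonneg_of_le _ _ hmaj
  · intro m
    split
    · exact Real.rpow_nonneg (enorm3_nonneg m) _
    · exact le_refl 0
  · intro m
    split
    · next hm => exact enorm3_rpow_le hm (by linarith)
    · positivity

theorem first_iterate_pointwise_bound
    (β α cg κg : ℝ) (γ : (Fin 3 → ℤ) → ℂ)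
    (hβ : β < -2) (hα : α < 2 * β - 1) (hα4 : α + 4 < 0)
    (hcg : 0 ≤ cg) (hκg : 16 ≤ κg) (hγ0 : γ 0 = 0)
    (hsum : Summable fun j : Fin 3 → ℤ => enorm3 j * ‖γ j‖)
    (hpow : ∀ j : Fin 3 → ℤ, κg ≤ enorm3 j → ‖γ j‖ ≤ cg * enorm3 j ^ α) :
    ∃ C > (0:ℝ), ∀ k : Fin 3 → ℤ, 2 * κg ≤ enorm3 k →
      (∑' j : Fin 3 → ℤ,
          if j ≠ 0 ∧ j ≠ k then
            enorm3 (k - j) ^ β * enorm3 j * ‖γ j‖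
          else 0) ≤
        C * min 1 ((2 * κg) ^ (-β) * enorm3 k ^ β) := by
  have hκ0 : (0:ℝ) < κg := by linarith
  set M : ℝ := ∑' j : Fin 3 → ℤ, enorm3 j * ‖γ j‖ with hM
  have hM0 : 0 ≤ M :=
    tsum_nonneg (fun j => mul_nonneg (enorm3_nonneg j) (norm_nonneg _))
  have h2β : 2 * β < -3 := by linarith
  set F : (Fin 3 → ℤ) → ℝ := fun m => if m ≠ 0 then enorm3 m ^ (2*β) else 0 with hF
  have hSsum : Summable F := summable_lattice_rpow h2β
  set S : ℝ := ∑' m, F m with hS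
  have hS0 : 0 ≤ S := tsum_nonneg (fun m => by
    simp only [hF]; split
    · exact Real.rpow_nonneg (enorm3_nonneg _) _
    · exact le_refl 0)
  set D : ℝ := cg * κg ^ (1 + α - 2*β) with hD
  have hD0 : 0 ≤ D := mul_nonneg hcg (Real.rpow_nonneg hκ0.le _)
  set C0 : ℝ := M + D * S with hC0
  have hC00 : 0 ≤ C0 := by positivity
  refine ⟨(C0 + 1) * κg ^ β, by positivity, ?_⟩
  intro k hk
  set K : ℝ := enorm3 k with hK
  have hK0 : (0:ℝ) < K := by linarith
  have hKhalf : κg ≤ K / 2 := by linarith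
  have hKhalf0 : (0:ℝ) < K / 2 := by linarith
  -- the min is the second argument
  have hmin : min 1 ((2 * κg) ^ (-β) * K ^ β) = (2 * κg) ^ (-β) * K ^ β := by
    apply min_eq_right
    have h1 : K ^ β ≤ (2 * κg) ^ β :=
      Real.rpow_le_rpow_of_nonpos (by linarith) hk (by linarith)
    calc (2 * κg) ^ (-β) * K ^ β ≤ (2 * κg) ^ (-β) * (2 * κg) ^ β := by
          apply mul_le_mul_of_nonneg_left h1 (Real.rpow_nonneg (by linarith) _)
    _ = 1 := by
        rw [← Real.rpow_add (by linarith), neg_add_cancel, Real.rpow_zero]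
  rw [hmin]
  set A : ℝ := (K / 2) ^ β with hA
  have hA0 : 0 ≤ A := Real.rpow_nonneg hKhalf0.le _
  -- the translated lattice sum
  set F2 : (Fin 3 → ℤ) → ℝ := fun j => if j ≠ k then enorm3 (k - j) ^ (2*β) else 0 with hF2
  have hF2eq : ∀ j, F2 j = F (k - j) := by
    intro j
    simp only [hF2, hF]
    by_cases hj : j = k
    · simp [hj]
    · rw [if_pos hj, if_pos (sub_ne_zero.mpr (Ne.symm hj))]
  have hF2sum : Summable F2 := by
    have h := ((Equiv.subLeft k).summable_iff
      (f := F)).mpr hSsum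
    apply h.congr
    intro j
    simp only [Function.comp, Equiv.subLeft_apply]
    exact (hF2eq j).symm
  have hF2tsum : ∑' j, F2 j = S := by
    calc ∑' j, F2 j = ∑' j, F ((Equiv.subLeft k) j) := by
          refine tsum_congr fun j => ?_
          rw [hF2eq j]; rfl
    _ = S := (Equiv.subLeft k).tsum_eq F
  -- the majorant
  set h : (Fin 3 → ℤ) → ℝ := fun j =>
    A * (enorm3 j * ‖γ j‖) + D * A / 2 * (F2 j + F j) with hh
  have hFnn : ∀ m, 0 ≤ F m := fun m => by
    simp only [hF]; split
    · exact Real.rpow_nonneg (enorm3_nonneg _) _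
    · exact le_refl 0
  have hF2nn : ∀ m, 0 ≤ F2 m := fun m => by rw [hF2eq]; exact hFnn _
  have hhnn : ∀ j, 0 ≤ h j := fun j => by
    apply add_nonneg
    · exact mul_nonneg hA0 (mul_nonneg (enorm3_nonneg _) (norm_nonneg _))
    · exact mul_nonneg (by positivity) (add_nonneg (hF2nn j) (hFnn j))
  have hhsum : Summable h :=
    (hsum.mul_left A).add ((hF2sum.add hSsum).mul_left (D * A / 2))
  -- pointwise bound
  have hpt : ∀ j : Fin 3 → ℤ,
      (if j ≠ 0 ∧ j ≠ k then enorm3 (k - j) ^ β * enorm3 j * ‖γ j‖ else 0)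
        ≤ h j := by
    intro j
    split
    · next hcond =>
      obtain ⟨hj0, hjk⟩ := hcond
      have hnj : (0:ℝ) < enorm3 j := enorm3_pos hj0
      have hkj0 : k - j ≠ 0 := sub_ne_zero.mpr (Ne.symm hjk)
      have hnjk : (0:ℝ) < enorm3 (k - j) := enorm3_pos hkj0
      have hg0 : 0 ≤ ‖γ j‖ := norm_nonneg _
      by_cases hcase : enorm3 j ≤ K / 2
      · -- region 1: |j| ≤ K/2, so |k-j| ≥ K/2
        have htri : K / 2 ≤ enorm3 (k - j) := by
          have := enorm3_triangle k j
          rw [← hK] at this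
          linarith
        have h1 : enorm3 (k - j) ^ β ≤ A :=
          Real.rpow_le_rpow_of_nonpos hKhalf0 htri (by linarith)
        have h2 : enorm3 (k - j) ^ β * enorm3 j * ‖γ j‖
            ≤ A * (enorm3 j * ‖γ j‖) := by
          rw [mul_assoc]
          exact mul_le_mul_of_nonneg_right h1 (mul_nonneg hnj.le hg0)
        calc enorm3 (k - j) ^ β * enorm3 j * ‖γ j‖
            ≤ A * (enorm3 j * ‖γ j‖) := h2
        _ ≤ h j := le_add_of_nonneg_right
            (mul_nonneg (by positivity) (add_nonneg (hF2nn j) (hFnn j)))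
      · -- region 2: |j| > K/2 ≥ κg
        push_neg at hcase
        have hjκ : κg ≤ enorm3 j := le_trans hKhalf hcase.le
        have hγb : ‖γ j‖ ≤ cg * enorm3 j ^ α := hpow j hjκ
        have e1 : 1 + α - β ≤ 0 := by linarith
        have e2 : 1 + α - 2*β ≤ 0 := by linarith
        set a := enorm3 (k - j) ^ β with hadef
        set b := enorm3 j ^ β with hbdef
        have ha0 : 0 ≤ a := Real.rpow_nonneg hnjk.le _
        have hb0 : 0 ≤ b := Real.rpow_nonneg hnj.le _
        -- step 1: γ bound
        have s1 : enorm3 (k - j) ^ β * enorm3 j * ‖γ j‖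
            ≤ cg * (a * (enorm3 j * enorm3 j ^ α)) := by
          calc enorm3 (k - j) ^ β * enorm3 j * ‖γ j‖
              ≤ enorm3 (k - j) ^ β * enorm3 j * (cg * enorm3 j ^ α) :=
                mul_le_mul_of_nonneg_left hγb (mul_nonneg ha0 hnj.le)
          _ = cg * (a * (enorm3 j * enorm3 j ^ α)) := by rw [hadef]; ring
        -- step 2: enorm3 j * enorm3 j ^ α = enorm3 j ^ (1+α) = b * enorm3 j ^ (1+α-β)
        have s2 : enorm3 j * enorm3 j ^ α = b * enorm3 j ^ (1 + α - β) := by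
          rw [hbdef, ← Real.rpow_add hnj, show β + (1 + α - β) = 1 + α by ring,
            Real.rpow_add hnj, Real.rpow_one]
        -- step 3: enorm3 j ^ (1+α-β) ≤ (K/2)^β * κg^(1+α-2β)
        have s3 : enorm3 j ^ (1 + α - β) ≤ A * κg ^ (1 + α - 2*β) := by
          calc enorm3 j ^ (1 + α - β) ≤ (K / 2) ^ (1 + α - β) :=
                Real.rpow_le_rpow_of_nonpos hKhalf0 hcase.le (by linarith)
          _ = (K / 2) ^ β * (K / 2) ^ (1 + α - 2*β) := by
              rw [← Real.rpow_add hKhalf0]; ring_nf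
          _ ≤ A * κg ^ (1 + α - 2*β) := by
              rw [hA]
              exact mul_le_mul_of_nonneg_left
                (Real.rpow_le_rpow_of_nonpos hκ0 hKhalf e2) hA0
        -- step 4: a * b ≤ (a^2 + b^2)/2 and squares are the 2β-powers
        have ha2 : a ^ 2 = enorm3 (k - j) ^ (2*β) := by
          rw [hadef, ← Real.rpow_natCast (enorm3 (k - j) ^ β) 2,
            ← Real.rpow_mul hnjk.le]
          norm_num; ring_nf
        have hb2 : b ^ 2 = enorm3 j ^ (2*β) := by
          rw [hbdef, ← Real.rpow_natCast (enorm3 j ^ β) 2, ← Real.rpow_mul hnj.le]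
          norm_num; ring_nf
        have s4 : a * b ≤ (F2 j + F j) / 2 := by
          have h2ab : 2 * a * b ≤ a ^ 2 + b ^ 2 := two_mul_le_add_sq a b
          have : F2 j = a ^ 2 := by rw [ha2, hF2]; simp [hjk]
          have hFj : F j = b ^ 2 := by rw [hb2, hF]; simp [hj0]
          rw [this, hFj]
          linarith
        -- combine
        calc enorm3 (k - j) ^ β * enorm3 j * ‖γ j‖
            ≤ cg * (a * (enorm3 j * enorm3 j ^ α)) := s1
        _ = cg * (a * (b * enorm3 j ^ (1 + α - β))) := by rw [s2]
        _ ≤ cg * (a * (b * (A * κg ^ (1 + α - 2*β)))) := by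
            apply mul_le_mul_of_nonneg_left _ hcg
            apply mul_le_mul_of_nonneg_left _ ha0
            exact mul_le_mul_of_nonneg_left s3 hb0
        _ = D * A * (a * b) := by rw [hD]; ring
        _ ≤ D * A * ((F2 j + F j) / 2) := by
            apply mul_le_mul_of_nonneg_left s4 (by positivity)
        _ = D * A / 2 * (F2 j + F j) := by ring
        _ ≤ h j := le_add_of_nonneg_left
            (mul_nonneg hA0 (mul_nonneg (enorm3_nonneg _) hg0))
    · exact hhnn _
  -- sum the bound
  have hLsum : Summable (fun j : Fin 3 → ℤ =>
      if j ≠ 0 ∧ j ≠ k then enorm3 (k - j) ^ β * enorm3 j * ‖γ j‖ else 0) := by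
    apply Summable.of_nonneg_of_le _ hpt hhsum
    intro j
    split
    · exact mul_nonneg (mul_nonneg (Real.rpow_nonneg (enorm3_nonneg _) _)
        (enorm3_nonneg _)) (norm_nonneg _)
    · exact le_refl 0
  have htsum_h : ∑' j, h j = A * C0 := by
    have h1 : ∑' j, h j
        = (∑' j, A * (enorm3 j * ‖γ j‖))
          + ∑' j, D * A / 2 * (F2 j + F j) :=
      Summable.tsum_add (hsum.mul_left A) ((hF2sum.add hSsum).mul_left (D * A / 2))
    rw [h1, Summable.tsum_mul_left A hsum, Summable.tsum_mul_left _ (hF2sum.add hSsum),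
      Summable.tsum_add hF2sum hSsum, hF2tsum, ← hM, ← hS, hC0]
    ring
  have hmain : (∑' j : Fin 3 → ℤ,
      if j ≠ 0 ∧ j ≠ k then enorm3 (k - j) ^ β * enorm3 j * ‖γ j‖ else 0)
      ≤ A * C0 := by
    rw [← htsum_h]
    exact Summable.tsum_le_tsum hpt hLsum hhsum
  -- final constant juggling
  have hAval : A = K ^ β * 2 ^ (-β) := by
    rw [hA, Real.div_rpow hK0.le (by norm_num), Real.rpow_neg (by norm_num),
      div_eq_mul_inv]
  have hfinal : A * C0 ≤ (C0 + 1) * κg ^ β * ((2 * κg) ^ (-β) * K ^ β) := by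
    have hexp : (2 * κg) ^ (-β) = 2 ^ (-β) * κg ^ (-β) :=
      Real.mul_rpow (by norm_num) hκ0.le
    have hκβ : κg ^ β * κg ^ (-β) = 1 := by
      rw [← Real.rpow_add hκ0, add_neg_cancel, Real.rpow_zero]
    have hrw : (C0 + 1) * κg ^ β * ((2 * κg) ^ (-β) * K ^ β)
        = (C0 + 1) * (κg ^ β * κg ^ (-β)) * (2 ^ (-β) * K ^ β) := by
      rw [hexp]; ring
    rw [hrw, hκβ, mul_one, hAval]
    have : (0:ℝ) ≤ 2 ^ (-β) * K ^ β := by positivity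
    calc K ^ β * 2 ^ (-β) * C0 ≤ K ^ β * 2 ^ (-β) * (C0 + 1) := by
          apply mul_le_mul_of_nonneg_left (by linarith) (by positivity)
    _ = (C0 + 1) * (2 ^ (-β) * K ^ β) := by ring
  calc (∑' j : Fin 3 → ℤ,
      if j ≠ 0 ∧ j ≠ k then enorm3 (k - j) ^ β * enorm3 j * ‖γ j‖ else 0)
      ≤ A * C0 := hmain
  _ ≤ (C0 + 1) * κg ^ β * ((2 * κg) ^ (-β) * K ^ β) := hfinal
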